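/- Let P be a network-local behavior realized by some local model M with hidden-variable spaces Ω_1, …, Ω_n, and let d = Π_i (A i) · Π_i (X i). Then there exist a weight vector w : Fin (d+1) → ℝ with w k ≥ 0 and Σ_k w k = 1, and points μ : Fin (d+1) → Ω_1, such that for all outputs ā and inputs x̄: P(ā|x̄) = Σ_{k=1}^{d+1} w k · ∫_{Π_{j≥2} Ω_j} Π_i R_i (a_i) (x_i) (λ_{[i]}) d(⊗_{j≥2} ρ_j)(λ), where in the integrand the value of the first hidden variable is fixed to λ_1 = μ k. In other words, P is reproduced by a model of cardinality (d+1, c_2, …, c_n) in which the first source is replaced by a discrete source on Fin (d+1), all other sources and all response functions being unchanged except for restriction of their first hidden-variable argument. -/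

import Mathlib

open MeasureTheory

section AuxConvex

open Module Set Filter

private lemma clm_le_zero_on_of_lt_zero_on_interior {E : Type*} [NormedAddCommGroup E]
    [NormedSpace ℝ E] {K : Set E} (hK : Convex ℝ K) {y : E} (hy : y ∈ interior K)
    (L : E →L[ℝ] ℝ) (hL : ∀ a ∈ interior K, L a < 0) {x : E} (hx : x ∈ K) : L x ≤ 0 := by
  have hmem : ∀ k : ℕ, ((k : ℝ) + 1)⁻¹ • y + (1 - ((k : ℝ) + 1)⁻¹) • x ∈ interior K := by
    intro k
    have h0k : (0 : ℝ) ≤ (k : ℝ) := Nat.cast_nonneg k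
    have h1 : (1 : ℝ) ≤ (k : ℝ) + 1 := by linarith
    refine hK.combo_interior_closure_mem_interior hy (subset_closure hx) ?_ ?_ (by ring)
    · positivity
    · have : ((k : ℝ) + 1)⁻¹ ≤ 1 := by
        rw [inv_le_one_iff₀]; right; exact h1
      linarith
  have htt : Tendsto (fun k : ℕ => ((k : ℝ) + 1)⁻¹) atTop (nhds 0) := by
    simpa [one_div] using tendsto_one_div_add_atTop_nhds_zero_nat (𝕜 := ℝ)
  have htend : Tendsto (fun k : ℕ => ((k : ℝ) + 1)⁻¹ * L y + (1 - ((k : ℝ) + 1)⁻¹) * L x)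
      atTop (nhds (L x)) := by
    have ha : Filter.Tendsto (fun k : ℕ => ((k : ℝ) + 1)⁻¹ * L y) atTop (nhds (0 * L y)) :=
      htt.mul_const _
    have hb : Filter.Tendsto (fun k : ℕ => (1 : ℝ) - ((k : ℝ) + 1)⁻¹) atTop (nhds (1 - 0)) :=
      (tendsto_const_nhds (x := (1 : ℝ))).sub htt
    have hc := ha.add (hb.mul_const (L x))
    simpa using hc
  refine le_of_tendsto htend (Filter.Eventually.of_forall fun k => ?_)
  have h := hL _ (hmem k)
  simpa [L.map_add, L.map_smul, smul_eq_mul] using h.le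

private lemma zero_mem_convexHull_range_of_integral_eq_zero :
    ∀ (N : ℕ) (E : Type) [NormedAddCommGroup E] [NormedSpace ℝ E] [FiniteDimensional ℝ E],
      Module.finrank ℝ E ≤ N →
      ∀ (α : Type) [MeasurableSpace α] (μ : Measure α) [IsProbabilityMeasure μ]
        (f : α → E), Integrable f μ → (∫ ω, f ω ∂μ) = 0 →
      (0 : E) ∈ convexHull ℝ (Set.range f) := by
  intro N
  induction N with
  | zero =>
    intro E _ _ _ hdim α _ μ _ f hf h0
    haveI : (ae μ).NeBot := ae_neBot.mpr (IsProbabilityMeasure.ne_zero μ)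
    obtain ⟨ω⟩ : Nonempty α := Filter.nonempty_of_neBot (ae μ)
    haveI : Subsingleton E := Module.finrank_zero_iff.mp (Nat.le_zero.mp hdim)
    have h : (0 : E) = f ω := Subsingleton.elim _ _
    exact h ▸ subset_convexHull ℝ _ (Set.mem_range_self ω)
  | succ N ih =>
    intro E _ _ _ hdim α _ μ _ f hf h0
    by_contra h0K
    set K := convexHull ℝ (Set.range f) with hKdef
    have hKconv : Convex ℝ K := convex_convexHull ℝ _
    have hmemK : ∀ ω, f ω ∈ K := fun ω => subset_convexHull ℝ _ (Set.mem_range_self ω)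
    have h0cl : (0 : E) ∈ closure K := by
      have := hKconv.closure.integral_mem isClosed_closure
        (Filter.Eventually.of_forall fun ω => subset_closure (hmemK ω)) hf
      rwa [h0] at this
    obtain ⟨V, hVne, hae⟩ : ∃ V : Submodule ℝ E, V ≠ ⊤ ∧ ∀ᵐ ω ∂μ, f ω ∈ V := by
      by_cases hint : (interior K).Nonempty
      · obtain ⟨y, hy⟩ := hint
        obtain ⟨L, hL⟩ := geometric_hahn_banach_open_point hKconv.interior isOpen_interior
          (fun h => h0K (interior_subset h))
        rw [map_zero] at hL
        have hLK : ∀ z ∈ K, L z ≤ 0 := fun z hz =>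
          clm_le_zero_on_of_lt_zero_on_interior hKconv hy L hL hz
        have hInt : Integrable (fun ω => -(L (f ω))) μ := (L.integrable_comp hf).neg
        have hzero : (∫ ω, -(L (f ω)) ∂μ) = 0 := by
          rw [integral_neg, L.integral_comp_comm hf, h0, map_zero, neg_zero]
        have hae0 : (fun ω => -(L (f ω))) =ᵐ[μ] 0 :=
          (integral_eq_zero_iff_of_nonneg
            (fun ω => neg_nonneg.mpr (hLK _ (hmemK ω))) hInt).mp hzero
        refine ⟨LinearMap.ker (L : E →ₗ[ℝ] ℝ), fun htop => ?_, ?_⟩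
        · have hyk : y ∈ LinearMap.ker (L : E →ₗ[ℝ] ℝ) := htop ▸ Submodule.mem_top
          have : L y = 0 := LinearMap.mem_ker.mp hyk
          exact absurd this (ne_of_lt (hL y hy))
        · filter_upwards [hae0] with ω hω
          have : L (f ω) = 0 := by
            have h' : -(L (f ω)) = 0 := hω
            linarith
          exact LinearMap.mem_ker.mpr this
      · have hspan : affineSpan ℝ K ≠ ⊤ := fun htop =>
          hint (hKconv.interior_nonempty_iff_affineSpan_eq_top.mpr htop)
        have h0span : (0 : E) ∈ affineSpan ℝ K := by
          have hclosed : IsClosed ((affineSpan ℝ K : Set E)) :=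
            (affineSpan ℝ K).closed_of_finiteDimensional
          exact hclosed.closure_subset_iff.mpr (subset_affineSpan ℝ K) h0cl
        refine ⟨(affineSpan ℝ K).direction, fun htop => hspan ?_,
          Filter.Eventually.of_forall fun ω => ?_⟩
        · exact (AffineSubspace.direction_eq_top_iff_of_nonempty ⟨0, h0span⟩).mp htop
        · have := AffineSubspace.vsub_mem_direction
            (subset_affineSpan ℝ K (hmemK ω)) h0span
          simpa [vsub_eq_sub] using this
    haveI : (ae μ).NeBot := ae_neBot.mpr (IsProbabilityMeasure.ne_zero μ)
    obtain ⟨ω₀, hω₀⟩ := hae.exists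
    classical
    set g : α → E := fun ω => if f ω ∈ V then f ω else f ω₀ with hgdef
    have hgV : ∀ ω, g ω ∈ V := fun ω => by
      by_cases h : f ω ∈ V <;> simp [hgdef, h, hω₀]
    have hgrange : ∀ ω, g ω ∈ Set.range f := fun ω => by
      show (if f ω ∈ V then f ω else f ω₀) ∈ Set.range f
      split <;> exact Set.mem_range_self _
    have hgf : g =ᵐ[μ] f := by filter_upwards [hae] with ω h; simp [hgdef, h]
    have hgint : Integrable g μ := hf.congr hgf.symm
    have hg0 : (∫ ω, g ω ∂μ) = 0 := by rw [integral_congr_ae hgf, h0]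
    set h' : α → V := fun ω => ⟨g ω, hgV ω⟩ with hh'def
    have hAESM : AEStronglyMeasurable h' μ := by
      have h1 : AEStronglyMeasurable (fun ω => ((h' ω : E))) μ := hgint.aestronglyMeasurable
      exact (Topology.IsEmbedding.subtypeVal.aestronglyMeasurable_comp_iff).mp h1
    have hInt' : Integrable h' μ := by
      refine Integrable.mono' hgint.norm hAESM (Filter.Eventually.of_forall fun ω => ?_)
      simp [Submodule.coe_norm, hh'def]
    have hInt0 : (∫ ω, h' ω ∂μ) = 0 := by
      have h1 : V.subtypeL (∫ ω, h' ω ∂μ) = ∫ ω, V.subtypeL (h' ω) ∂μ :=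
        (V.subtypeL.integral_comp_comm hInt').symm
      have h2 : (∫ ω, V.subtypeL (h' ω) ∂μ) = 0 := by
        simp only [Submodule.subtypeL_apply]
        exact hg0
      have h3 : ((∫ ω, h' ω ∂μ : V) : E) = 0 := by
        rw [← Submodule.subtypeL_apply, h1, h2]
      exact_mod_cast Submodule.coe_eq_zero.mp h3
    have hVrank : Module.finrank ℝ V ≤ N := by
      have hlt : Module.finrank ℝ V < Module.finrank ℝ E :=
        Submodule.finrank_lt hVne
      omega
    have h0V : (0 : V) ∈ convexHull ℝ (Set.range h') := ih V hVrank α μ h' hInt' hInt0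
    have himg : (V.subtype) 0 ∈ (V.subtype) '' (convexHull ℝ (Set.range h')) :=
      Set.mem_image_of_mem _ h0V
    rw [LinearMap.image_convexHull] at himg
    have hr : (V.subtype) '' (Set.range h') = Set.range g := by
      rw [← Set.range_comp]; rfl
    rw [hr, map_zero] at himg
    exact h0K (convexHull_mono (Set.range_subset_iff.mpr hgrange) himg)

private lemma integral_mem_convexHull' {E : Type} [NormedAddCommGroup E] [NormedSpace ℝ E]
    [FiniteDimensional ℝ E] {α : Type} [MeasurableSpace α] (μ : Measure α)
    [IsProbabilityMeasure μ] {f : α → E} (hf : Integrable f μ) :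
    (∫ ω, f ω ∂μ) ∈ convexHull ℝ (Set.range f) := by
  set c := ∫ ω, f ω ∂μ with hc
  have hg : Integrable (fun ω => f ω - c) μ := hf.sub (integrable_const c)
  have h0 : (∫ ω, (f ω - c) ∂μ) = 0 := by
    rw [integral_sub hf (integrable_const c), integral_const, probReal_univ]; simp [hc]
  have h0m := zero_mem_convexHull_range_of_integral_eq_zero (Module.finrank ℝ E) E le_rfl
    α μ _ hg h0
  have hr : Set.range (fun ω => f ω - c) = (fun z => z - c) '' Set.range f := by
    rw [← Set.range_comp]; rfl
  rw [hr] at h0m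
  have haff : convexHull ℝ ((fun z : E => z - c) '' Set.range f)
      = (fun z : E => z - c) '' (convexHull ℝ (Set.range f)) := by
    have : (fun z : E => z - c) = ⇑((AffineEquiv.constVAdd ℝ E (-c)).toAffineMap) := by
      funext z
      simp [AffineEquiv.constVAdd, sub_eq_neg_add]
      rfl
    rw [this, AffineMap.image_convexHull]
  rw [haff] at h0m
  obtain ⟨z, hz, hz0⟩ := h0m
  have hzc : z = c := sub_eq_zero.mp (by simpa using hz0)
  exact hzc ▸ hz

private lemma sum_dite_fin {β : Type*} [AddCommMonoid β] {M d : ℕ} (hMle : M ≤ d + 1)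
    (F : Fin M → β) :
    (∑ k : Fin (d + 1), if h : (k : ℕ) < M then F ⟨(k : ℕ), h⟩ else 0) = ∑ j, F j := by
  classical
  rw [Fin.sum_univ_eq_sum_range (fun i => if h : i < M then F ⟨i, h⟩ else 0) (d + 1)]
  have h2 : (∑ j : Fin M, F j) = ∑ i ∈ Finset.range M, (if h : i < M then F ⟨i, h⟩ else 0) := by
    rw [← Fin.sum_univ_eq_sum_range (fun i => if h : i < M then F ⟨i, h⟩ else 0) M]
    refine Finset.sum_congr rfl fun j _ => ?_
    rw [dif_pos j.2]
  rw [h2]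
  exact (Finset.sum_subset (Finset.range_subset_range.mpr (by omega)) fun x _ hx => by
    rw [Finset.mem_range, not_lt] at hx
    exact dif_neg (by omega)).symm

private lemma exists_fin_convex_comb {E : Type} [NormedAddCommGroup E] [NormedSpace ℝ E]
    [FiniteDimensional ℝ E] {s : Set E} {c : E} (d : ℕ) (hrank : Module.finrank ℝ E ≤ d)
    (hc : c ∈ convexHull ℝ s) :
    ∃ (w : Fin (d + 1) → ℝ) (z : Fin (d + 1) → E),
      (∀ k, 0 ≤ w k) ∧ (∑ k, w k = 1) ∧ (∀ k, z k ∈ s) ∧ (∑ k, w k • z k = c) := by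
  classical
  obtain ⟨ι, hfin, z, v, hrange, hindep, hpos, hsum, hcenter⟩ :=
    eq_pos_convex_span_of_mem_convexHull hc
  letI := hfin
  haveI hne : Nonempty ι := by
    by_contra hne
    haveI := not_nonempty_iff.mp hne
    rw [Finset.univ_eq_empty, Finset.sum_empty] at hsum
    exact one_ne_zero hsum.symm
  have hMle : Fintype.card ι ≤ d + 1 := by
    have h1 := hindep.card_le_finrank_succ
    have h2 : Module.finrank ℝ (vectorSpan ℝ (Set.range z)) ≤ Module.finrank ℝ E :=
      Submodule.finrank_le _
    omega
  have hMpos : 0 < Fintype.card ι := Fintype.card_pos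
  set M := Fintype.card ι with hM
  let e : Fin M ≃ ι := (Fintype.equivFin ι).symm
  refine ⟨fun k => if h : (k : ℕ) < M then v (e ⟨(k : ℕ), h⟩) else 0,
    fun k => if h : (k : ℕ) < M then z (e ⟨(k : ℕ), h⟩) else z (e ⟨0, hMpos⟩), ?_, ?_, ?_, ?_⟩
  · intro k; dsimp only; split
    · exact (hpos _).le
    · exact le_refl 0
  · rw [sum_dite_fin hMle (fun j => v (e j))]
    rw [Equiv.sum_comp e v]; exact hsum
  · intro k; dsimp only; split <;> exact hrange (Set.mem_range_self _)
  · have : ∀ k : Fin (d + 1),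
        (if h : (k : ℕ) < M then v (e ⟨(k : ℕ), h⟩) else 0) •
          (if h : (k : ℕ) < M then z (e ⟨(k : ℕ), h⟩) else z (e ⟨0, hMpos⟩))
        = if h : (k : ℕ) < M then v (e ⟨(k : ℕ), h⟩) • z (e ⟨(k : ℕ), h⟩) else 0 := by
      intro k; split
      · rfl
      · rw [zero_smul]
    rw [Finset.sum_congr rfl fun k _ => this k]
    rw [sum_dite_fin hMle (fun j => v (e j) • z (e j))]
    rw [Equiv.sum_comp e (fun i => v i • z i)]
    exact hcenter

end AuxConvex


/-- Extend an assignment of hidden variables on the sources other than `j0`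
by the value `μ0` at the source `j0`. -/
def extendHV {n : ℕ} {Ω : Fin n → Type} (j0 : Fin n) (μ0 : Ω j0)
    (lam : ∀ j : {j : Fin n // j ≠ j0}, Ω j.1) (j : Fin n) : Ω j :=
  if h : j = j0 then cast (congrArg Ω h.symm) μ0 else lam ⟨j, h⟩

lemma extendHV_same {n : ℕ} {Ω : Fin n → Type} (j0 : Fin n) (μ0 : Ω j0)
    (lam : ∀ j : {j : Fin n // j ≠ j0}, Ω j.1) : extendHV j0 μ0 lam j0 = μ0 := by
  unfold extendHV
  rw [dif_pos rfl]
  rfl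

lemma extendHV_ne {n : ℕ} {Ω : Fin n → Type} (j0 : Fin n) (μ0 : Ω j0)
    (lam : ∀ j : {j : Fin n // j ≠ j0}, Ω j.1) {j : Fin n} (h : j ≠ j0) :
    extendHV j0 μ0 lam j = lam ⟨j, h⟩ := by
  unfold extendHV
  rw [dif_neg h]

/-- **Proposition 2 (cardinality bound).** Any network-local behavior `P`,
realized by a local model with hidden-variable spaces `Ω j`, can be reproduced
by a model in which the first source is replaced by a discrete source taking at
most `d + 1` values (`d = ∏ A i · ∏ X i`), all other sources and all response
functions being unchanged. -/
theorem cardinality_bound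
    {m n : ℕ} (hm : 1 ≤ m) (hn : 1 ≤ n)
    (I : Fin m → Fin n → Prop) [∀ i j, Decidable (I i j)]
    (X A : Fin m → ℕ) (hX : ∀ i, 1 ≤ X i) (hA : ∀ i, 1 ≤ A i)
    (Ω : Fin n → Type) [∀ j, MeasurableSpace (Ω j)]
    (ρ : ∀ j, Measure (Ω j)) [∀ j, IsProbabilityMeasure (ρ j)]
    (R : ∀ i : Fin m, Fin (A i) → Fin (X i) → (∀ j : {j // I i j}, Ω j.1) → ℝ)
    (hRmeas : ∀ i a x, Measurable (R i a x))
    (hRpos : ∀ i a x lam, 0 ≤ R i a x lam)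
    (hRnorm : ∀ i x lam, ∑ a, R i a x lam = 1)
    (P : (∀ i, Fin (A i)) → (∀ i, Fin (X i)) → ℝ)
    (hP : ∀ a x, P a x =
      ∫ lam : ∀ j, Ω j, ∏ i, R i (a i) (x i) (fun j => lam j.1) ∂ Measure.pi ρ)
    (d : ℕ) (hd : d = (∏ i, A i) * (∏ i, X i)) :
    ∃ (w : Fin (d + 1) → ℝ) (μ : Fin (d + 1) → Ω ⟨0, hn⟩),
      (∀ k, 0 ≤ w k) ∧ (∑ k, w k = 1) ∧
      ∀ a x, P a x = ∑ k, w k *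
        ∫ lam : ∀ j : {j : Fin n // j ≠ ⟨0, hn⟩}, Ω j.1,
          ∏ i, R i (a i) (x i) (fun j => extendHV ⟨0, hn⟩ (μ k) lam j.1)
          ∂ Measure.pi (fun j : {j : Fin n // j ≠ ⟨0, hn⟩} => ρ j.1) := by
  classical
  set j0 : Fin n := ⟨0, hn⟩ with hj0
  let β := ∀ j : {j : Fin n // j ≠ j0}, Ω j.1
  let ν : Measure β := Measure.pi (fun j : {j : Fin n // j ≠ j0} => ρ j.1)
  haveI hνp : IsProbabilityMeasure ν := by
    exact MeasureTheory.Measure.pi.instIsProbabilityMeasure _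
  letI hu : Unique {j : Fin n // ¬ j ≠ j0} :=
    ⟨⟨⟨j0, not_not_intro rfl⟩⟩, fun a => Subtype.ext (not_not.mp a.2)⟩
  let u0 : {j : Fin n // ¬ j ≠ j0} := ⟨j0, not_not_intro rfl⟩
  let γ := ∀ j : {j : Fin n // ¬ j ≠ j0}, Ω j.1
  let μu : Measure γ := Measure.pi (fun j : {j : Fin n // ¬ j ≠ j0} => ρ j.1)
  haveI hμup : IsProbabilityMeasure μu := by
    exact MeasureTheory.Measure.pi.instIsProbabilityMeasure _
  let E := (∀ i, Fin (A i)) → (∀ i, Fin (X i)) → ℝ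
  let G : Ω j0 → E := fun ω a x =>
    ∫ lam : ∀ j : {j : Fin n // j ≠ j0}, Ω j.1,
      ∏ i, R i (a i) (x i) (fun j => extendHV j0 ω lam j.1)
      ∂ Measure.pi (fun j : {j : Fin n // j ≠ j0} => ρ j.1)
  -- basic bounds
  have hRle1 : ∀ i a x lam, R i a x lam ≤ 1 := by
    intro i a x lam
    calc R i a x lam ≤ ∑ a', R i a' x lam :=
          Finset.single_le_sum (fun a' _ => hRpos i a' x lam) (Finset.mem_univ a)
      _ = 1 := hRnorm i x lam
  have hprod_mem : ∀ (a : ∀ i, Fin (A i)) (x : ∀ i, Fin (X i)) (lam : ∀ j, Ω j),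
      0 ≤ (∏ i, R i (a i) (x i) fun j => lam j.1) ∧
        (∏ i, R i (a i) (x i) fun j => lam j.1) ≤ 1 := by
    intro a x lam
    exact ⟨Finset.prod_nonneg fun i _ => hRpos _ _ _ _,
      Finset.prod_le_one (fun i _ => hRpos _ _ _ _) (fun i _ => hRle1 _ _ _ _)⟩
  have hΦmeas : ∀ (a : ∀ i, Fin (A i)) (x : ∀ i, Fin (X i)),
      Measurable (fun lam : ∀ j, Ω j => ∏ i, R i (a i) (x i) fun j => lam j.1) :=
    fun a x => Finset.measurable_prod _ fun i _ => (hRmeas i (a i) (x i)).comp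
      (measurable_pi_lambda _ fun j => measurable_pi_apply j.1)
  -- the equivalence
  let φ := MeasurableEquiv.piEquivPiSubtypeProd Ω (fun j : Fin n => j ≠ j0)
  have hmp := measurePreserving_piEquivPiSubtypeProd ρ (fun j : Fin n => j ≠ j0)
  have hkey : ∀ (lam : β) (u : γ),
      φ.symm (lam, u) = extendHV j0 (u u0) lam := by
    intro lam u
    funext j
    show (Equiv.piEquivPiSubtypeProd (fun j : Fin n => j ≠ j0) Ω).symm (lam, u) j = _
    rw [Equiv.piEquivPiSubtypeProd_symm_apply]
    by_cases h : j = j0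
    · subst h
      rw [dif_neg (not_not_intro rfl), extendHV_same]
    · rw [dif_pos h, extendHV_ne j0 (u u0) lam h]
  have hext : Measurable (fun q : Ω j0 × β => extendHV j0 q.1 q.2) := by
    apply measurable_pi_lambda
    intro j
    by_cases h : j = j0
    · subst h
      have hco : (fun q : Ω j0 × β => extendHV j0 q.1 q.2 j0) = fun q => q.1 :=
        funext fun q => extendHV_same _ _ _
      rw [hco]
      exact measurable_fst
    · have hco : (fun q : Ω j0 × β => extendHV j0 q.1 q.2 j) = fun q => q.2 ⟨j, h⟩ :=
        funext fun q => extendHV_ne _ _ _ h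
      rw [hco]
      exact (measurable_pi_apply _).comp measurable_snd
  -- Fubini: P a x = ∫ ω, G ω a x ∂ρ j0
  have hPG : ∀ a x, P a x = ∫ ω, G ω a x ∂(ρ j0) := by
    intro a x
    rw [hP a x]
    have hΨint : Integrable (fun q : β × γ =>
        ∏ i, R i (a i) (x i) fun j => φ.symm q j.1) (ν.prod μu) := by
      refine ⟨((hΦmeas a x).comp φ.symm.measurable).aestronglyMeasurable, ?_⟩
      refine HasFiniteIntegral.of_bounded (C := 1) (Filter.Eventually.of_forall fun q => ?_)
      rw [Real.norm_eq_abs, abs_le]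
      have h := hprod_mem a x (φ.symm q)
      exact ⟨by linarith [h.1], h.2⟩
    calc (∫ lam : ∀ j, Ω j, ∏ i, R i (a i) (x i) fun j => lam j.1 ∂Measure.pi ρ)
        = ∫ q : β × γ, (∏ i, R i (a i) (x i) fun j => φ.symm q j.1) ∂(ν.prod μu) := by
          have := hmp.integral_comp'
            (g := fun q : β × γ => ∏ i, R i (a i) (x i) fun j => φ.symm q j.1)
          rw [← this]
          refine integral_congr_ae (Filter.Eventually.of_forall fun lam => ?_)
          simp only [φ, MeasurableEquiv.symm_apply_apply]
      _ = ∫ u : γ, ∫ lam : β, (∏ i, R i (a i) (x i) fun j => φ.symm (lam, u) j.1) ∂ν ∂μu :=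
          integral_prod_symm _ hΨint
      _ = ∫ u : γ, G (u u0) a x ∂μu := by
          refine integral_congr_ae (Filter.Eventually.of_forall fun u => ?_)
          refine integral_congr_ae (Filter.Eventually.of_forall fun lam => ?_)
          dsimp only
          rw [hkey lam u]
      _ = ∫ ω, G ω a x ∂(ρ j0) := by
          have hup := measurePreserving_piUnique (fun j : {j : Fin n // ¬ j ≠ j0} => ρ j.1)
          exact hup.integral_comp' (g := fun ω => G ω a x)
  -- measurability and integrability of G
  have hGcomp : ∀ a x, Measurable fun ω : Ω j0 => G ω a x := by
    intro a x
    have h1 : StronglyMeasurable (fun q : Ω j0 × β =>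
        ∏ i, R i (a i) (x i) fun j => extendHV j0 q.1 q.2 j.1) :=
      ((hΦmeas a x).comp hext).stronglyMeasurable
    exact (h1.integral_prod_right' (ν := ν)).measurable
  have hGmeasE : Measurable G :=
    measurable_pi_lambda _ fun a => measurable_pi_lambda _ fun x => hGcomp a x
  have hGbd : ∀ ω, ‖G ω‖ ≤ 1 := by
    intro ω
    rw [pi_norm_le_iff_of_nonneg zero_le_one]
    intro a
    rw [pi_norm_le_iff_of_nonneg zero_le_one]
    intro x
    have := norm_integral_le_of_norm_le_const (μ := ν) (C := 1)
      (f := fun lam : β => ∏ i, R i (a i) (x i) fun j => extendHV j0 ω lam j.1)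
      (Filter.Eventually.of_forall fun lam => by
        rw [Real.norm_eq_abs, abs_le]
        have h := hprod_mem a x (extendHV j0 ω lam)
        exact ⟨by linarith [h.1], h.2⟩)
    simpa [measure_univ] using this
  have hGint : Integrable G (ρ j0) :=
    ⟨hGmeasE.stronglyMeasurable.aestronglyMeasurable,
      HasFiniteIntegral.of_bounded (C := 1) (Filter.Eventually.of_forall hGbd)⟩
  -- convexity argument
  have hc : (∫ ω, G ω ∂(ρ j0)) ∈ convexHull ℝ (Set.range G) :=
    integral_mem_convexHull' _ hGint
  have hrank : Module.finrank ℝ E ≤ d := by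
    have hE : Module.finrank ℝ E = (∏ i, A i) * (∏ i, X i) := by
      simp [E, Module.finrank_pi_fintype, Module.finrank_pi, Fintype.card_pi,
        Finset.sum_const, mul_comm]
    omega
  obtain ⟨w, zf, hw0, hw1, hzmem, hzsum⟩ := exists_fin_convex_comb d hrank hc
  have hμspec : ∀ k, G (hzmem k).choose = zf k := fun k => (hzmem k).choose_spec
  have hcomp : ∀ a x, (∫ ω, G ω ∂(ρ j0)) a x = ∫ ω, G ω a x ∂(ρ j0) := by
    intro a x
    have := (((ContinuousLinearMap.proj (R := ℝ) (φ := fun _ : ∀ i, Fin (X i) => ℝ) x).comp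
      (ContinuousLinearMap.proj (R := ℝ)
        (φ := fun _ : ∀ i, Fin (A i) => (∀ i, Fin (X i)) → ℝ) a)).integral_comp_comm hGint)
    simpa using this.symm
  refine ⟨w, fun k => (hzmem k).choose, hw0, hw1, fun a x => ?_⟩
  calc P a x = ∫ ω, G ω a x ∂(ρ j0) := hPG a x
    _ = (∫ ω, G ω ∂(ρ j0)) a x := (hcomp a x).symm
    _ = (∑ k, w k • zf k) a x := by rw [hzsum]
    _ = ∑ k, w k * zf k a x := by
        rw [Finset.sum_apply, Finset.sum_apply]
        exact Finset.sum_congr rfl fun k _ => rfl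
    _ = ∑ k, w k * G (hzmem k).choose a x := by
        refine Finset.sum_congr rfl fun k _ => ?_
        rw [hμspec k]
    _ = _ := rfl
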